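/- Let σ ∈ (-3/2, -1/2), κ = (2σ+1)/(2σ), and for Ω ≥ 1, Z ≥ 1 with Z ≤ Ω set M_σ(Ω,Z) as before. Then Ω² M_σ(Ω,Z) M_{-σ}(Ω,Z) ≤ C Ω^{-1} for a constant C depending only on σ, uniformly over the parameter region. -/

import Mathlib

set_option maxHeartbeats 2000000 in
theorem stmt_18 (σ : ℝ) (hσ : σ ∈ Set.Ioo (-(3:ℝ)/2) (-(1:ℝ)/2)) :
    ∃ C > 0, ∀ Ω Z : ℝ, 1 ≤ Z → Z ≤ Ω →
      Ω^2
        * Real.sqrt (∑' k : ℕ, ((k+1:ℝ)^2 + Z^2) ^ (-σ) / ((k+1:ℝ)^2 * ((k+1:ℝ)^4 + Ω^4)))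
        * Real.sqrt (∑' k : ℕ, ((k+1:ℝ)^2 + Z^2) ^ σ / ((k+1:ℝ)^2 * ((k+1:ℝ)^4 + Ω^4)))
      ≤ C / Ω := by
  obtain ⟨h1, h2⟩ := hσ
  set τ : ℝ := -σ with hτdef
  have hτ1 : (1:ℝ)/2 < τ := by simp only [hτdef]; linarith
  have hτ2 : τ < 3/2 := by simp only [hτdef]; linarith
  -- summable majorants
  have hsumA : Summable (fun k : ℕ => ((k:ℝ)+1) ^ (2*τ-4)) := by
    have h0 : Summable (fun k : ℕ => ((k:ℝ)) ^ (2*τ-4)) :=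
      Real.summable_nat_rpow.mpr (by linarith)
    have := (summable_nat_add_iff 1).mpr h0
    simpa using this
  have hsumB : Summable (fun k : ℕ => ((k:ℝ)+1) ^ (-2:ℝ)) := by
    have h0 : Summable (fun k : ℕ => ((k:ℝ)) ^ (-2:ℝ)) :=
      Real.summable_nat_rpow.mpr (by norm_num)
    have := (summable_nat_add_iff 1).mpr h0
    simpa using this
  set A : ℝ := ∑' k : ℕ, ((k:ℝ)+1) ^ (2*τ-4) with hAdef
  set B : ℝ := ∑' k : ℕ, ((k:ℝ)+1) ^ (-2:ℝ) with hBdef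
  have hA1 : (1:ℝ) ≤ A := by
    have := Summable.le_tsum hsumA 0 (fun i _ => Real.rpow_nonneg (by positivity) _)
    simpa using this
  have hB1 : (1:ℝ) ≤ B := by
    have := Summable.le_tsum hsumB 0 (fun i _ => Real.rpow_nonneg (by positivity) _)
    simpa [hBdef] using this
  have h2τ : (0:ℝ) < 2 ^ τ := Real.rpow_pos_of_pos (by norm_num) τ
  refine ⟨Real.sqrt (2 ^ τ * A * B), Real.sqrt_pos.mpr (by positivity), ?_⟩
  intro Ω Z hZ hZΩ
  have hΩ1 : (1:ℝ) ≤ Ω := le_trans hZ hZΩ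
  have hΩ0 : (0:ℝ) < Ω := by linarith
  have hZ0 : (0:ℝ) < Z := by linarith
  -- termwise bound for the first sum
  have hb1 : ∀ k : ℕ, ((k+1:ℝ)^2 + Z^2) ^ (-σ) / ((k+1:ℝ)^2 * ((k+1:ℝ)^4 + Ω^4))
      ≤ (2 ^ τ * Z ^ (2*τ) / Ω^2) * ((k:ℝ)+1) ^ (2*τ-4) := by
    intro k
    set x : ℝ := (k:ℝ) + 1 with hxdef
    have hx1 : (1:ℝ) ≤ x := by
      rw [hxdef]; linarith [Nat.cast_nonneg (α := ℝ) k]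
    have hx0 : (0:ℝ) < x := by linarith
    have hP : x ^ (2*τ) = x ^ (2*τ-4) * x ^ 4 := by
      rw [← Real.rpow_natCast x 4, ← Real.rpow_add hx0]
      norm_num
    have hN : (x^2 + Z^2) ^ (-σ) ≤ 2 ^ τ * x ^ (2*τ) * Z ^ (2*τ) := by
      rw [show (-σ) = τ from rfl]
      calc (x^2 + Z^2) ^ τ ≤ (2 * x^2 * Z^2) ^ τ := by
            apply Real.rpow_le_rpow (by positivity) ?_ (by linarith)
            have hx2' : (1:ℝ) ≤ x^2 := by nlinarith
            have hZ2' : (1:ℝ) ≤ Z^2 := by nlinarith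
            nlinarith [mul_nonneg (sub_nonneg.mpr hx2') (sub_nonneg.mpr hZ2')]
        _ = 2 ^ τ * x ^ (2*τ) * Z ^ (2*τ) := by
            rw [Real.mul_rpow (by positivity) (by positivity),
                Real.mul_rpow (by norm_num) (by positivity),
                ← Real.rpow_natCast x 2, ← Real.rpow_natCast Z 2,
                ← Real.rpow_mul hx0.le, ← Real.rpow_mul hZ0.le]
            norm_num
    have hD : 2 * (x^4 * Ω^2) ≤ x^2 * (x^4 + Ω^4) := by
      nlinarith [mul_nonneg (sq_nonneg x) (sq_nonneg (x^2 - Ω^2))]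
    calc (x^2 + Z^2) ^ (-σ) / (x^2 * (x^4 + Ω^4))
        ≤ (2 ^ τ * x ^ (2*τ) * Z ^ (2*τ)) / (2 * (x^4 * Ω^2)) :=
          div_le_div₀ (by positivity) hN (by positivity) hD
      _ = (2 ^ τ * Z ^ (2*τ) * x ^ (2*τ-4)) / (2 * Ω^2) := by
          rw [hP]; field_simp
      _ ≤ (2 ^ τ * Z ^ (2*τ) * x ^ (2*τ-4)) / Ω^2 := by
          gcongr
          nlinarith [sq_nonneg Ω]
      _ = (2 ^ τ * Z ^ (2*τ)) / Ω^2 * x ^ (2*τ-4) := by ring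
  -- termwise bound for the second sum
  have hb2 : ∀ k : ℕ, ((k+1:ℝ)^2 + Z^2) ^ σ / ((k+1:ℝ)^2 * ((k+1:ℝ)^4 + Ω^4))
      ≤ (Z ^ (2*σ) / Ω^4) * ((k:ℝ)+1) ^ (-2:ℝ) := by
    intro k
    set x : ℝ := (k:ℝ) + 1 with hxdef
    have hx1 : (1:ℝ) ≤ x := by
      rw [hxdef]; linarith [Nat.cast_nonneg (α := ℝ) k]
    have hx0 : (0:ℝ) < x := by linarith
    have hN : (x^2 + Z^2) ^ σ ≤ Z ^ (2*σ) := by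
      have : (x^2 + Z^2) ^ σ ≤ (Z^2) ^ σ :=
        Real.rpow_le_rpow_of_nonpos (by positivity) (by nlinarith) (by linarith)
      calc (x^2 + Z^2) ^ σ ≤ (Z^2) ^ σ := this
        _ = Z ^ (2*σ) := by
            rw [← Real.rpow_natCast Z 2, ← Real.rpow_mul hZ0.le]; norm_num
    have hD : x^2 * Ω^4 ≤ x^2 * (x^4 + Ω^4) := by nlinarith [pow_pos hx0 2, pow_pos hx0 4]
    have hx2 : x ^ (-2:ℝ) = (x^2)⁻¹ := by
      rw [Real.rpow_neg hx0.le, ← Real.rpow_natCast x 2]; norm_num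
    calc (x^2 + Z^2) ^ σ / (x^2 * (x^4 + Ω^4))
        ≤ Z ^ (2*σ) / (x^2 * Ω^4) :=
          div_le_div₀ (Real.rpow_nonneg (by positivity) _) hN (by positivity) hD
      _ = (Z ^ (2*σ) / Ω^4) * x ^ (-2:ℝ) := by
          rw [hx2]; field_simp
  -- summability and tsum bounds
  have nn1 : ∀ k : ℕ, 0 ≤ ((k+1:ℝ)^2 + Z^2) ^ (-σ) / ((k+1:ℝ)^2 * ((k+1:ℝ)^4 + Ω^4)) := by
    intro k; positivity
  have nn2 : ∀ k : ℕ, 0 ≤ ((k+1:ℝ)^2 + Z^2) ^ σ / ((k+1:ℝ)^2 * ((k+1:ℝ)^4 + Ω^4)) := by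
    intro k; positivity
  have hsum1 : Summable (fun k : ℕ => ((k+1:ℝ)^2 + Z^2) ^ (-σ) / ((k+1:ℝ)^2 * ((k+1:ℝ)^4 + Ω^4))) :=
    Summable.of_nonneg_of_le nn1 hb1 (hsumA.mul_left _)
  have hsum2 : Summable (fun k : ℕ => ((k+1:ℝ)^2 + Z^2) ^ σ / ((k+1:ℝ)^2 * ((k+1:ℝ)^4 + Ω^4))) :=
    Summable.of_nonneg_of_le nn2 hb2 (hsumB.mul_left _)
  have hS1 : (∑' k : ℕ, ((k+1:ℝ)^2 + Z^2) ^ (-σ) / ((k+1:ℝ)^2 * ((k+1:ℝ)^4 + Ω^4)))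
      ≤ (2 ^ τ * Z ^ (2*τ) / Ω^2) * A := by
    rw [hAdef, ← tsum_mul_left]
    exact Summable.tsum_le_tsum hb1 hsum1 (hsumA.mul_left _)
  have hS2 : (∑' k : ℕ, ((k+1:ℝ)^2 + Z^2) ^ σ / ((k+1:ℝ)^2 * ((k+1:ℝ)^4 + Ω^4)))
      ≤ (Z ^ (2*σ) / Ω^4) * B := by
    rw [hBdef, ← tsum_mul_left]
    exact Summable.tsum_le_tsum hb2 hsum2 (hsumB.mul_left _)
  have hZZ : Z ^ (2*τ) * Z ^ (2*σ) = 1 := by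
    rw [← Real.rpow_add hZ0]
    have : 2*τ + 2*σ = 0 := by rw [hτdef]; ring
    rw [this, Real.rpow_zero]
  have hA0 : (0:ℝ) ≤ A := by linarith
  have hB0 : (0:ℝ) ≤ B := by linarith
  have hprod : (2 ^ τ * Z ^ (2*τ) / Ω^2 * A) * (Z ^ (2*σ) / Ω^4 * B)
      = 2 ^ τ * A * B / Ω^6 := by
    have : (2 ^ τ * Z ^ (2*τ) / Ω^2 * A) * (Z ^ (2*σ) / Ω^4 * B)
        = (2 ^ τ * A * B) * (Z ^ (2*τ) * Z ^ (2*σ)) / Ω^6 := by ring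
    rw [this, hZZ, mul_one]
  calc Ω^2 * Real.sqrt (∑' k : ℕ, ((k+1:ℝ)^2 + Z^2) ^ (-σ) / ((k+1:ℝ)^2 * ((k+1:ℝ)^4 + Ω^4)))
        * Real.sqrt (∑' k : ℕ, ((k+1:ℝ)^2 + Z^2) ^ σ / ((k+1:ℝ)^2 * ((k+1:ℝ)^4 + Ω^4)))
      ≤ Ω^2 * Real.sqrt (2 ^ τ * Z ^ (2*τ) / Ω^2 * A) * Real.sqrt (Z ^ (2*σ) / Ω^4 * B) := by
        apply mul_le_mul ?_ (Real.sqrt_le_sqrt hS2) (Real.sqrt_nonneg _) (by positivity)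
        exact mul_le_mul_of_nonneg_left (Real.sqrt_le_sqrt hS1) (by positivity)
    _ = Ω^2 * Real.sqrt ((2 ^ τ * Z ^ (2*τ) / Ω^2 * A) * (Z ^ (2*σ) / Ω^4 * B)) := by
        rw [mul_assoc, ← Real.sqrt_mul (mul_nonneg (by positivity) hA0)]
    _ = Ω^2 * (Real.sqrt (2 ^ τ * A * B) / Ω^3) := by
        rw [hprod, Real.sqrt_div (mul_nonneg (mul_nonneg h2τ.le hA0) hB0),
            show Ω^6 = (Ω^3)^2 by ring, Real.sqrt_sq (by positivity)]
    _ = Real.sqrt (2 ^ τ * A * B) / Ω := by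
        field_simp
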